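/- Let $u_0: B_r \to (0,\infty)$ be continuous on a ball $B_r \subset \mathbb{R}^n$, $n \ge 3$, and suppose that for every ball $B_\lambda(x) \subset B_r$ and every $y \in B_r \setminus B_\lambda(x)$, the Kelvin transform satisfies $(u_0)_{x,\lambda}(y) := \left(\frac{\lambda}{|y-x|}\right)^{n-2} u_0\left(x + \frac{\lambda^2(y-x)}{|y-x|^2}\right) \le u_0(y)$. Then $\ln u_0$ is locally Lipschitz in $B_r$ and $|\nabla \ln u_0(x)| \le \frac{n-2}{r - |x|}$ for almost every $x \in B_r$. -/

import Mathlib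

open MeasureTheory Real

section Aux

variable {n : ℕ} {r : ℝ} {u0 : EuclideanSpace ℝ (Fin n) → ℝ}

lemma kelvin_key (hn : 3 ≤ n) (hr : 0 < r)
    (hpos : ∀ y ∈ Metric.ball (0 : EuclideanSpace ℝ (Fin n)) r, 0 < u0 y)
    (hkelvin : ∀ (x : EuclideanSpace ℝ (Fin n)) (lam : ℝ), 0 < lam →
      Metric.ball x lam ⊆ Metric.ball (0 : EuclideanSpace ℝ (Fin n)) r →
      ∀ y ∈ Metric.ball (0 : EuclideanSpace ℝ (Fin n)) r, lam ≤ ‖y - x‖ →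
        (lam / ‖y - x‖) ^ (((n : ℝ)) - 2) * u0 (x + (lam ^ 2 / ‖y - x‖ ^ 2) • (y - x))
          ≤ u0 y)
    {y z : EuclideanSpace ℝ (Fin n)}
    (hy : y ∈ Metric.ball (0 : EuclideanSpace ℝ (Fin n)) r)
    (hz : z ∈ Metric.ball (0 : EuclideanSpace ℝ (Fin n)) r)
    {t : ℝ} (ht : 0 < t) (hcond : ‖z‖ + 2 * t + ‖y - z‖ / 2 ≤ r) :
    Real.log (u0 z) - Real.log (u0 y) ≤ ((n : ℝ) - 2) * ‖y - z‖ / (2 * t) := by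
  rcases eq_or_ne y z with rfl | hyz
  · simp
  set d : ℝ := ‖y - z‖ with hd
  have hd0 : 0 < d := by
    rw [hd, norm_pos_iff]
    exact sub_ne_zero_of_ne hyz
  set x : EuclideanSpace ℝ (Fin n) := z - (t / d) • (y - z) with hx
  set lam : ℝ := Real.sqrt (t * (t + d)) with hlam
  have hlam2 : lam ^ 2 = t * (t + d) := Real.sq_sqrt (by positivity)
  have hlam0 : 0 < lam := Real.sqrt_pos.2 (by positivity)
  have hyx : y - x = ((d + t) / d) • (y - z) := by
    have hcoef : (d + t) / d = 1 + t / d := by field_simp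
    rw [hx, hcoef]
    module
  have hnyx : ‖y - x‖ = d + t := by
    rw [hyx, norm_smul, ← hd, Real.norm_eq_abs, abs_of_pos (by positivity),
      div_mul_cancel₀ _ hd0.ne']
  have hlamle : lam ≤ ‖y - x‖ := by
    rw [hnyx, hlam]
    rw [show d + t = Real.sqrt ((d+t)^2) from (Real.sqrt_sq (by positivity)).symm]
    apply Real.sqrt_le_sqrt
    nlinarith
  have hlamle2 : lam ≤ t + d / 2 := by
    rw [hlam, show t + d/2 = Real.sqrt ((t + d/2)^2) from (Real.sqrt_sq (by positivity)).symm]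
    apply Real.sqrt_le_sqrt
    nlinarith
  have hnx : ‖x‖ ≤ ‖z‖ + t := by
    rw [hx]
    refine (norm_sub_le _ _).trans ?_
    rw [norm_smul, ← hd, Real.norm_eq_abs, abs_of_pos (by positivity),
      div_mul_cancel₀ _ hd0.ne']
  have hsub : Metric.ball x lam ⊆ Metric.ball (0 : EuclideanSpace ℝ (Fin n)) r := by
    intro w hw
    rw [Metric.mem_ball, dist_zero_right]
    have h1 : ‖w - x‖ < lam := by
      rw [← dist_eq_norm]; exact hw
    calc ‖w‖ = ‖w - x + x‖ := by rw [sub_add_cancel]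
      _ ≤ ‖w - x‖ + ‖x‖ := norm_add_le _ _
      _ < lam + (‖z‖ + t) := by linarith
      _ ≤ (t + d/2) + (‖z‖ + t) := by linarith
      _ ≤ r := by linarith
  have hinv : x + (lam ^ 2 / ‖y - x‖ ^ 2) • (y - x) = z := by
    rw [hnyx, hlam2, hyx, hx, smul_smul]
    have : t * (t + d) / (d + t) ^ 2 * ((d + t) / d) = t / d := by
      field_simp
      ring
    rw [this]
    module
  have hk := hkelvin x lam hlam0 hsub y hy hlamle
  rw [hinv, hnyx] at hk
  -- now hk : (lam / (d + t)) ^ ((n:ℝ) - 2) * u0 z ≤ u0 y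
  have huy : 0 < u0 y := hpos y hy
  have huz : 0 < u0 z := hpos z hz
  have hdt0 : (0:ℝ) < d + t := by linarith
  have hbase : 0 < lam / (d + t) := by positivity
  have hpow : 0 < (lam / (d + t)) ^ ((n:ℝ) - 2) := Real.rpow_pos_of_pos hbase _
  have hlog := Real.log_le_log (by positivity) hk
  rw [Real.log_mul hpow.ne' huz.ne', Real.log_rpow hbase] at hlog
  have hlogb : Real.log (lam / (d + t)) = -(Real.log ((t + d)/t) / 2) := by
    have h1 : (lam / (d + t)) ^ (2:ℕ) = t / (t + d) := by
      rw [div_pow, hlam2]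
      field_simp
      ring
    have h2 : (2:ℝ) * Real.log (lam / (d+t)) = Real.log (t / (t+d)) := by
      rw [show (2:ℝ) = ((2:ℕ):ℝ) by norm_num, ← Real.log_pow, h1]
    have h3 : Real.log (t / (t+d)) = - Real.log ((t+d)/t) := by
      rw [← Real.log_inv, inv_div]
    linarith
  rw [hlogb] at hlog
  have hn2 : (0:ℝ) ≤ (n:ℝ) - 2 := by
    have : (3:ℝ) ≤ (n:ℝ) := by exact_mod_cast hn
    linarith
  have hlogest : Real.log ((t + d)/t) ≤ d / t := by
    have := Real.log_le_sub_one_of_pos (show (0:ℝ) < (t+d)/t by positivity)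
    have : Real.log ((t+d)/t) ≤ (t+d)/t - 1 := this
    have he : (t+d)/t - 1 = d / t := by field_simp; ring
    linarith [he ▸ this]
  have : Real.log (u0 z) - Real.log (u0 y) ≤ ((n:ℝ) - 2) * (Real.log ((t+d)/t) / 2) := by
    nlinarith
  refine this.trans ?_
  have heq : ((n:ℝ) - 2) * d / (2 * t) = ((n:ℝ) - 2) * ((d / t) / 2) := by
    field_simp
  rw [heq]
  gcongr

lemma kelvin_lipOn (hn : 3 ≤ n) (hr : 0 < r)
    (hpos : ∀ y ∈ Metric.ball (0 : EuclideanSpace ℝ (Fin n)) r, 0 < u0 y)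
    (hkelvin : ∀ (x : EuclideanSpace ℝ (Fin n)) (lam : ℝ), 0 < lam →
      Metric.ball x lam ⊆ Metric.ball (0 : EuclideanSpace ℝ (Fin n)) r →
      ∀ y ∈ Metric.ball (0 : EuclideanSpace ℝ (Fin n)) r, lam ≤ ‖y - x‖ →
        (lam / ‖y - x‖) ^ (((n : ℝ)) - 2) * u0 (x + (lam ^ 2 / ‖y - x‖ ^ 2) • (y - x))
          ≤ u0 y)
    {x₀ : EuclideanSpace ℝ (Fin n)} {t ε : ℝ} (ht : 0 < t) (hε : 0 < ε)
    (hc : ‖x₀‖ + 2 * ε + 2 * t ≤ r) :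
    LipschitzOnWith (((n : ℝ) - 2) / (2 * t)).toNNReal
      (fun y => Real.log (u0 y)) (Metric.ball x₀ ε) := by
  have hn2 : (0:ℝ) ≤ (n:ℝ) - 2 := by
    have : (3:ℝ) ≤ (n:ℝ) := by exact_mod_cast hn
    linarith
  have hC0 : (0:ℝ) ≤ ((n : ℝ) - 2) / (2 * t) := by positivity
  have hball : ∀ w ∈ Metric.ball x₀ ε, w ∈ Metric.ball (0 : EuclideanSpace ℝ (Fin n)) r := by
    intro w hw
    rw [Metric.mem_ball, dist_zero_right]
    have h1 : ‖w - x₀‖ < ε := by rw [← dist_eq_norm]; exact hw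
    calc ‖w‖ = ‖w - x₀ + x₀‖ := by rw [sub_add_cancel]
      _ ≤ ‖w - x₀‖ + ‖x₀‖ := norm_add_le _ _
      _ < ε + ‖x₀‖ := by linarith
      _ ≤ r := by linarith
  apply LipschitzOnWith.of_dist_le_mul
  intro y hy z hz
  have hyr := hball y hy
  have hzr := hball z hz
  have hyn : ‖y - x₀‖ < ε := by rw [← dist_eq_norm]; exact hy
  have hzn : ‖z - x₀‖ < ε := by rw [← dist_eq_norm]; exact hz
  have hdyz : ‖y - z‖ < 2 * ε := by
    calc ‖y - z‖ = ‖(y - x₀) - (z - x₀)‖ := by rw [sub_sub_sub_cancel_right]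
      _ ≤ ‖y - x₀‖ + ‖z - x₀‖ := norm_sub_le _ _
      _ < 2 * ε := by linarith
  have hny : ‖y‖ < ‖x₀‖ + ε := by
    calc ‖y‖ = ‖y - x₀ + x₀‖ := by rw [sub_add_cancel]
      _ ≤ ‖y - x₀‖ + ‖x₀‖ := norm_add_le _ _
      _ < ‖x₀‖ + ε := by linarith
  have hnz : ‖z‖ < ‖x₀‖ + ε := by
    calc ‖z‖ = ‖z - x₀ + x₀‖ := by rw [sub_add_cancel]
      _ ≤ ‖z - x₀‖ + ‖x₀‖ := norm_add_le _ _
      _ < ‖x₀‖ + ε := by linarith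
  have h1 := kelvin_key hn hr hpos hkelvin hyr hzr ht
    (by linarith : ‖z‖ + 2 * t + ‖y - z‖ / 2 ≤ r)
  have h2 := kelvin_key hn hr hpos hkelvin hzr hyr ht
    (by rw [norm_sub_rev]; linarith : ‖y‖ + 2 * t + ‖z - y‖ / 2 ≤ r)
  rw [norm_sub_rev z y] at h2
  rw [Real.coe_toNNReal _ hC0, Real.dist_eq, dist_eq_norm, abs_sub_le_iff]
  have heq : ((n:ℝ) - 2) * ‖y - z‖ / (2 * t) = ((n:ℝ) - 2) / (2 * t) * ‖y - z‖ := by ring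
  rw [heq] at h1 h2
  exact ⟨h2, h1⟩

end Aux
/-- Li–Li, Li–Nguyen: if a positive continuous function `u₀` on the ball
`B_r ⊂ ℝ^n` is bounded below by all its Kelvin transforms
`(u₀)_{x,λ}(y) = (λ/|y-x|)^{n-2} u₀(x + λ²(y-x)/|y-x|²)` for spheres contained in `B_r`,
then `ln u₀` is locally Lipschitz in `B_r` and `|∇ ln u₀(x)| ≤ (n-2)/(r-|x|)` a.e. -/
theorem log_gradient_bound_from_kelvin (n : ℕ) (hn : 3 ≤ n) (r : ℝ) (hr : 0 < r)
    (u0 : EuclideanSpace ℝ (Fin n) → ℝ)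
    (hcont : ContinuousOn u0 (Metric.ball (0 : EuclideanSpace ℝ (Fin n)) r))
    (hpos : ∀ y ∈ Metric.ball (0 : EuclideanSpace ℝ (Fin n)) r, 0 < u0 y)
    (hkelvin : ∀ (x : EuclideanSpace ℝ (Fin n)) (lam : ℝ), 0 < lam →
      Metric.ball x lam ⊆ Metric.ball (0 : EuclideanSpace ℝ (Fin n)) r →
      ∀ y ∈ Metric.ball (0 : EuclideanSpace ℝ (Fin n)) r, lam ≤ ‖y - x‖ →
        (lam / ‖y - x‖) ^ (((n : ℝ)) - 2) * u0 (x + (lam ^ 2 / ‖y - x‖ ^ 2) • (y - x))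
          ≤ u0 y) :
    LocallyLipschitzOn (Metric.ball (0 : EuclideanSpace ℝ (Fin n)) r)
        (fun x => Real.log (u0 x)) ∧
      ∀ᵐ x : EuclideanSpace ℝ (Fin n), x ∈ Metric.ball (0 : EuclideanSpace ℝ (Fin n)) r →
        ‖fderiv ℝ (fun y => Real.log (u0 y)) x‖ ≤ ((n : ℝ) - 2) / (r - ‖x‖) := by
  have hn2 : (1:ℝ) ≤ (n:ℝ) - 2 := by
    have : (3:ℝ) ≤ (n:ℝ) := by exact_mod_cast hn
    linarith
  constructor
  · intro x hx
    have hxr : ‖x‖ < r := by rwa [Metric.mem_ball, dist_zero_right] at hx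
    have hε0 : 0 < (r - ‖x‖) / 4 := by linarith
    exact ⟨(((n:ℝ) - 2) / (2 * ((r - ‖x‖) / 4))).toNNReal, Metric.ball x ((r - ‖x‖) / 4),
      mem_nhdsWithin_of_mem_nhds (Metric.ball_mem_nhds x hε0),
      kelvin_lipOn hn hr hpos hkelvin hε0 hε0 (by linarith)⟩
  · set g : EuclideanSpace ℝ (Fin n) → ℝ := fun y => Real.log (u0 y) with hgdef
    have hbound : ∀ x ∈ Metric.ball (0 : EuclideanSpace ℝ (Fin n)) r,
        DifferentiableAt ℝ g x → ‖fderiv ℝ g x‖ ≤ ((n : ℝ) - 2) / (r - ‖x‖) := by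
      intro x hx hdiff
      have hxr : ‖x‖ < r := by rwa [Metric.mem_ball, dist_zero_right] at hx
      have hR : 0 < r - ‖x‖ := by linarith
      set A : ℝ := ((n:ℝ) - 2) / (r - ‖x‖) with hA
      have hA0 : 0 < A := by rw [hA]; positivity
      refine le_of_forall_pos_le_add ?_
      intro δ hδ
      set t : ℝ := ((n:ℝ) - 2) / (2 * (A + δ)) with htdef
      have ht : 0 < t := by rw [htdef]; positivity
      have htR : 2 * t < r - ‖x‖ := by
        have h1 : t < ((n:ℝ) - 2) / (2 * A) := by
          apply div_lt_div_of_pos_left (by linarith) (by positivity)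
          linarith
        have h2 : ((n:ℝ) - 2) / (2 * A) = (r - ‖x‖) / 2 := by
          rw [hA]
          field_simp
        linarith
      set ε : ℝ := (r - ‖x‖ - 2 * t) / 2 with hεdef
      have hε : 0 < ε := by rw [hεdef]; linarith
      have hlip := kelvin_lipOn (x₀ := x) hn hr hpos hkelvin ht hε
        (by rw [hεdef]; ring_nf; linarith : ‖x‖ + 2 * ε + 2 * t ≤ r)
      have hle := hdiff.hasFDerivAt.le_of_lipschitzOn
        (Metric.ball_mem_nhds x hε) hlip
      rw [Real.coe_toNNReal _ (by positivity : (0:ℝ) ≤ ((n:ℝ) - 2) / (2 * t))] at hle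
      have heq : ((n:ℝ) - 2) / (2 * t) = A + δ := by
        rw [htdef]
        have h1 : ((n:ℝ) - 2) ≠ 0 := by linarith
        have h2 : A + δ ≠ 0 := by positivity
        field_simp
      rwa [heq] at hle
    have hdiffae : ∀ᵐ x : EuclideanSpace ℝ (Fin n),
        x ∈ Metric.ball (0 : EuclideanSpace ℝ (Fin n)) r → DifferentiableAt ℝ g x := by
      obtain ⟨D, hDc, hDd⟩ := TopologicalSpace.exists_countable_dense (EuclideanSpace ℝ (Fin n))
      have hper : ∀ x₀ ∈ D, ∀ᵐ x : EuclideanSpace ℝ (Fin n),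
          (‖x₀‖ < r → x ∈ Metric.ball x₀ ((r - ‖x₀‖) / 4) → DifferentiableAt ℝ g x) := by
        intro x₀ _
        by_cases h : ‖x₀‖ < r
        · have hε : 0 < (r - ‖x₀‖) / 4 := by linarith
          have hlip := kelvin_lipOn (x₀ := x₀) hn hr hpos hkelvin hε hε (by linarith)
          have hae := hlip.ae_differentiableWithinAt_of_mem (μ := volume)
          filter_upwards [hae] with x hx _ hmem
          exact (hx hmem).differentiableAt (Metric.isOpen_ball.mem_nhds hmem)
        · filter_upwards with x hx
          exact absurd hx h
      have hcomb := (MeasureTheory.ae_ball_iff hDc).2 hper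
      filter_upwards [hcomb] with x hx hmem
      have hxr : ‖x‖ < r := by rwa [Metric.mem_ball, dist_zero_right] at hmem
      set δ : ℝ := (r - ‖x‖) / 8 with hδdef
      have hδ : 0 < δ := by rw [hδdef]; linarith
      obtain ⟨x₀, hx₀D, hx₀mem⟩ := hDd.exists_mem_open Metric.isOpen_ball
        ⟨x, Metric.mem_ball_self hδ⟩
      have hdist : dist x₀ x < δ := hx₀mem
      have hnx₀ : ‖x₀‖ < ‖x‖ + δ := by
        calc ‖x₀‖ = ‖x₀ - x + x‖ := by rw [sub_add_cancel]
          _ ≤ ‖x₀ - x‖ + ‖x‖ := norm_add_le _ _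
          _ < δ + ‖x‖ := by rw [← dist_eq_norm]; linarith
          _ = ‖x‖ + δ := by ring
      have hx₀r : ‖x₀‖ < r := by linarith
      have hxin : x ∈ Metric.ball x₀ ((r - ‖x₀‖) / 4) := by
        rw [Metric.mem_ball, dist_comm]
        linarith
      exact hx x₀ hx₀D hx₀r hxin
    filter_upwards [hdiffae] with x hx hmem
    exact hbound x hmem (hx hmem)
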